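/- For every positive integer n, (1/π) ∫_{-π/2}^{π/2} ∏_{i=0}^{n−1} sin(x + i·π/n)^2 dx = 2/4^n. -/

import Mathlib

open Real MeasureTheory

lemma prod_z_sub_pow {n : ℕ} (hn : 0 < n) {ξ : ℂ} (hξ : IsPrimitiveRoot ξ n) (z : ℂ) :
    ∏ k ∈ Finset.range n, (z - ξ ^ k) = z ^ n - 1 := by
  have h := X_pow_sub_C_eq_prod hξ hn (one_pow n)
  have h2 := congrArg (Polynomial.eval z) h
  simpa [Polynomial.eval_prod] using h2.symm

open Complex in
lemma two_I_sin (z : ℂ) : 2 * I * Complex.sin z = Complex.exp (z * I) - Complex.exp (-(z * I)) := by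
  rw [Complex.sin]
  field_simp
  ring_nf
  rw [Complex.I_sq]
  ring

open Complex in
lemma sin_prod_complex (n : ℕ) (hn : 0 < n) (w : ℂ) :
    ∏ k ∈ Finset.range n, Complex.sin (w + k * ↑π / n) =
      Complex.sin (n * w) / 2 ^ (n - 1) := by
  have hn0 : (n : ℂ) ≠ 0 := Nat.cast_ne_zero.mpr hn.ne'
  set a : ℂ := Complex.exp (w * I) with ha
  set b : ℂ := Complex.exp (↑π / n * I) with hb
  have haz : a ≠ 0 := Complex.exp_ne_zero _
  have hbz : b ≠ 0 := Complex.exp_ne_zero _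
  -- ζ = b ^ 2 is a primitive n-th root of unity
  have hzeta : IsPrimitiveRoot (b ^ 2) n := by
    have h1 : b ^ 2 = Complex.exp (2 * ↑π * I / n) := by
      rw [hb, ← Complex.exp_nat_mul]
      norm_num
      ring_nf
    rw [h1]
    exact Complex.isPrimitiveRoot_exp n hn.ne'
  -- each factor
  have hfac : ∀ k ∈ Finset.range n, 2 * I * Complex.sin (w + k * ↑π / n)
      = (a * b ^ k)⁻¹ * ((a ^ 2 * (b ^ 2) ^ k) - 1) := by
    intro k _
    rw [two_I_sin]
    have e1 : Complex.exp ((w + k * ↑π / n) * I) = a * b ^ k := by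
      rw [ha, hb, ← Complex.exp_nat_mul, ← Complex.exp_add]
      ring_nf
    have e2 : Complex.exp (-((w + k * ↑π / n) * I)) = (a * b ^ k)⁻¹ := by
      rw [Complex.exp_neg, e1]
    rw [e1, e2]
    field_simp
    ring
  -- product of factors
  have hprodL : ∏ k ∈ Finset.range n, (2 * I * Complex.sin (w + k * ↑π / n))
      = (2 * I) ^ n * ∏ k ∈ Finset.range n, Complex.sin (w + k * ↑π / n) := by
    rw [Finset.prod_mul_distrib]
    simp [Finset.prod_const]
  -- product of RHS
  set S : ℕ := ∑ k ∈ Finset.range n, k with hS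
  have hprodR : ∏ k ∈ Finset.range n, ((a * b ^ k)⁻¹ * ((a ^ 2 * (b ^ 2) ^ k) - 1))
      = (a ^ n * b ^ S)⁻¹ * ((b ^ 2) ^ S * ((a ^ 2) ^ n - 1)) := by
    rw [Finset.prod_mul_distrib]
    congr 1
    · rw [Finset.prod_inv_distrib, Finset.prod_mul_distrib, Finset.prod_const,
        Finset.prod_pow_eq_pow_sum]
      simp
      exact Or.inl rfl
    · have h1 : ∀ k ∈ Finset.range n, a ^ 2 * (b ^ 2) ^ k - 1
          = (b ^ 2) ^ k * (a ^ 2 - ((b ^ 2)⁻¹) ^ k) := by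
        intro k _
        have : ((b ^ 2) ^ k : ℂ) ≠ 0 := pow_ne_zero _ (pow_ne_zero _ hbz)
        rw [inv_pow, mul_sub, mul_inv_cancel₀ this]; ring
      rw [Finset.prod_congr rfl h1, Finset.prod_mul_distrib,
        Finset.prod_pow_eq_pow_sum, prod_z_sub_pow hn hzeta.inv]
  -- b ^ S = I ^ (n-1)
  have hbS : b ^ S = I ^ (n - 1) := by
    have h2 : (S : ℂ) * 2 = n * (n - 1 : ℕ) := by
      have := Finset.sum_range_id_mul_two n
      exact_mod_cast congrArg (Nat.cast : ℕ → ℂ) this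
    have hI : Complex.exp (↑π / 2 * I) = I := by
      have h3 : (↑π / 2 : ℂ) = ((π / 2 : ℝ) : ℂ) := by push_cast; ring
      rw [h3, Complex.exp_mul_I, ← Complex.ofReal_cos, ← Complex.ofReal_sin,
        Real.cos_pi_div_two, Real.sin_pi_div_two]
      simp
    have hc : ((n - 1 : ℕ) : ℂ) = (n : ℂ) - 1 := by
      have := Nat.cast_sub (R := ℂ) hn
      simpa using this
    rw [hc] at h2
    have hexp : (S : ℂ) * (↑π / ↑n * I) = ((n - 1 : ℕ) : ℂ) * (↑π / 2 * I) := by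
      rw [hc]
      field_simp
      linear_combination h2
    rw [hb, ← Complex.exp_nat_mul, hexp, Complex.exp_nat_mul, hI]
  have hb2S : (b ^ 2) ^ S = I ^ (n - 1) * I ^ (n - 1) := by
    rw [← pow_mul, mul_comm 2 S, pow_mul, hbS]; ring
  -- 2 I sin (n w)
  have hsin : 2 * I * Complex.sin (n * w) = a ^ n - (a ^ n)⁻¹ := by
    rw [two_I_sin, Complex.exp_neg]
    congr 2 <;> · rw [ha, ← Complex.exp_nat_mul]; ring_nf
  -- combine
  have hanz : (a : ℂ) ^ n ≠ 0 := pow_ne_zero _ haz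
  have hIz : (I : ℂ) ^ (n - 1) ≠ 0 := pow_ne_zero _ Complex.I_ne_zero
  have key : (2 * I) ^ n * ∏ k ∈ Finset.range n, Complex.sin (w + k * ↑π / n)
      = I ^ (n - 1) * (2 * I * Complex.sin (n * w)) := by
    rw [← hprodL, Finset.prod_congr rfl hfac, hprodR, hb2S, hbS, hsin]
    field_simp
    ring
  have h2I : (2 * I : ℂ) ^ n = 2 ^ (n - 1) * (I ^ (n - 1) * (2 * I)) := by
    obtain ⟨m, rfl⟩ := Nat.exists_eq_succ_of_ne_zero hn.ne'
    simp [pow_succ, mul_pow]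
    ring
  rw [h2I] at key
  rw [eq_div_iff (pow_ne_zero (n - 1) (two_ne_zero : (2:ℂ) ≠ 0))]
  apply mul_left_cancel₀ (show (I ^ (n-1) * (2 * I) : ℂ) ≠ 0 from
    mul_ne_zero hIz (by simp [Complex.I_ne_zero]))
  calc I ^ (n-1) * (2 * I) * ((∏ k ∈ Finset.range n, Complex.sin (w + k * ↑π / n)) * 2 ^ (n-1))
      = 2 ^ (n - 1) * (I ^ (n - 1) * (2 * I)) * ∏ k ∈ Finset.range n, Complex.sin (w + k * ↑π / n) := by
        ring
    _ = I ^ (n - 1) * (2 * I * Complex.sin (n * w)) := key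
    _ = I ^ (n-1) * (2 * I) * Complex.sin (n * w) := by ring

lemma sin_prod_real (n : ℕ) (hn : 0 < n) (x : ℝ) :
    ∏ i ∈ Finset.range n, Real.sin (x + i * π / n) = Real.sin (n * x) / 2 ^ (n - 1) := by
  have h := sin_prod_complex n hn (x : ℂ)
  apply Complex.ofReal_injective
  push_cast
  exact h

lemma integral_sin_sq_smul (n : ℕ) (hn : 0 < n) :
    ∫ x in (-(π/2))..(π/2), Real.sin (n * x) ^ 2 = π / 2 := by
  have hn0 : (n : ℝ) ≠ 0 := Nat.cast_ne_zero.mpr hn.ne'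
  have h := intervalIntegral.integral_comp_mul_left (a := -(π/2)) (b := π/2)
    (fun y => Real.sin y ^ 2) hn0
  rw [h, integral_sin_sq]
  have h2 : Real.sin ((n : ℝ) * π) = 0 := Real.sin_nat_mul_pi n
  have h1 : Real.sin (↑n * (π/2)) * Real.cos (↑n * (π/2)) = 0 := by
    have h3 := Real.sin_two_mul ((n : ℝ) * (π/2))
    rw [show (2 * ((n:ℝ) * (π/2)) : ℝ) = ↑n * π by ring, h2] at h3
    linarith
  rw [show ((n:ℝ) * -(π/2) : ℝ) = -((n:ℝ) * (π/2)) by ring, Real.sin_neg, Real.cos_neg]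
  rw [show (-Real.sin (↑n*(π/2)) * Real.cos (↑n*(π/2)) - Real.sin (↑n*(π/2)) * Real.cos (↑n*(π/2))
        + ↑n*(π/2) - -(↑n*(π/2))) / 2
      = ↑n*(π/2) - Real.sin (↑n*(π/2)) * Real.cos (↑n*(π/2)) by ring, h1, sub_zero,
    smul_eq_mul]
  field_simp

theorem stmt_10 (n : ℕ) (hn : 0 < n) :
    (1 / π) * ∫ x in (-(π/2))..(π/2), ∏ i ∈ Finset.range n, Real.sin (x + i * π / n) ^ 2
      = 2 / 4 ^ n := by
  have hint : ∀ x : ℝ, ∏ i ∈ Finset.range n, Real.sin (x + i * π / n) ^ 2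
      = Real.sin (n * x) ^ 2 * ((4 : ℝ) ^ (n - 1))⁻¹ := by
    intro x
    rw [Finset.prod_pow, sin_prod_real n hn x, div_pow,
      show ((2:ℝ) ^ (n-1)) ^ 2 = 4 ^ (n-1) by rw [← pow_mul, mul_comm, pow_mul]; norm_num]
    ring
  have hi : (∫ x in (-(π/2))..(π/2), ∏ i ∈ Finset.range n, Real.sin (x + i * π / n) ^ 2)
      = ∫ x in (-(π/2))..(π/2), Real.sin (n * x) ^ 2 * ((4 : ℝ) ^ (n - 1))⁻¹ := by
    apply intervalIntegral.integral_congr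
    intro x _
    exact hint x
  rw [hi, intervalIntegral.integral_mul_const, integral_sin_sq_smul n hn]
  obtain ⟨m, rfl⟩ := Nat.exists_eq_succ_of_ne_zero hn.ne'
  have h4 : (4:ℝ) ^ (m+1) = 4 ^ m * 4 := by ring
  simp only [Nat.succ_sub_one, h4]
  have : (4:ℝ) ^ m ≠ 0 := by positivity
  field_simp [Real.pi_ne_zero]
  ring
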